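/- Let T_i be a perfect Roman domination stable tree and let u ∈ W(T_i). If T_{i+1} is the tree obtained from T_i by adding three new vertices v_1, v_2, v_3, the path edges v_3v_2 and v_2v_1, and the edge uv_3 (Operation O_1), then T_{i+1} is a perfect Roman domination stable tree. -/

import Mathlib

open SimpleGraph

/-- A perfect Roman dominating function: values in {0,1,2}, and every vertex with
value 0 has exactly one neighbor with value 2. -/
def IsPRDF {V : Type*} (G : SimpleGraph V) (f : V → ℕ) : Prop :=
  (∀ v, f v ≤ 2) ∧ ∀ u, f u = 0 → ∃! v, G.Adj u v ∧ f v = 2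

/-- The perfect Roman domination number: minimum weight of a PRDF. -/
noncomputable def prdn {V : Type*} [Fintype V] (G : SimpleGraph V) : ℕ :=
  sInf {w | ∃ f : V → ℕ, IsPRDF G f ∧ ∑ v, f v = w}

/-- A graph is perfect Roman domination stable if removing any vertex
leaves the perfect Roman domination number unchanged. -/
noncomputable def Stable {V : Type*} [Fintype V] [DecidableEq V] (G : SimpleGraph V) : Prop :=
  ∀ v : V, prdn (G.induce {u | u ≠ v}) = prdn G

/-- The set of vertices receiving 0 under every minimum-weight PRDF. -/
def Wset {V : Type*} [Fintype V] (G : SimpleGraph V) : Set V :=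
  {u | ∀ f : V → ℕ, IsPRDF G f → (∑ v, f v) = prdn G → f u = 0}

/-- Degree of a vertex. -/
noncomputable def deg {V : Type*} (G : SimpleGraph V) (v : V) : ℕ := (G.neighborSet v).ncard
lemma isPRDF_const_one {V : Type*} (G : SimpleGraph V) : IsPRDF G (fun _ => 1) :=
  ⟨fun _ => one_le_two, fun _ h => absurd h one_ne_zero⟩

lemma prdn_le {V : Type*} [Fintype V] (G : SimpleGraph V) {f : V → ℕ} (hf : IsPRDF G f) :
    prdn G ≤ ∑ v, f v := Nat.sInf_le ⟨f, hf, rfl⟩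

lemma exists_prdn {V : Type*} [Fintype V] (G : SimpleGraph V) :
    ∃ f, IsPRDF G f ∧ ∑ v, f v = prdn G :=
by
  have hne : {w | ∃ f : V → ℕ, IsPRDF G f ∧ ∑ v, f v = w}.Nonempty :=
    ⟨∑ _v : V, (1:ℕ), ⟨fun _ => 1, isPRDF_const_one G, rfl⟩⟩
  exact Nat.sInf_mem hne

lemma prdn_le_of_map {V W : Type*} [Fintype V] [Fintype W] (G : SimpleGraph V)
    (H : SimpleGraph W) (e : V ≃ W) (he : ∀ a b, G.Adj a b ↔ H.Adj (e a) (e b)) :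
    prdn H ≤ prdn G := by
  obtain ⟨f, hf, hsum⟩ := exists_prdn G
  have hP : IsPRDF H (f ∘ e.symm) := by
    constructor
    · intro v; exact hf.1 _
    · intro w hw
      obtain ⟨v, ⟨hadj, hv2⟩, huniq⟩ := hf.2 (e.symm w) hw
      refine ⟨e v, ⟨?_, by simp [hv2]⟩, ?_⟩
      · have := (he (e.symm w) v).mp hadj
        simpa using this
      · rintro y ⟨hadj', hy2⟩
        have : e.symm y = v := by
          apply huniq
          refine ⟨?_, hy2⟩
          rw [he]; simpa using hadj'
        rw [← this]; simp
  calc prdn H ≤ ∑ w, (f ∘ e.symm) w := prdn_le H hP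
    _ = ∑ v, f v := Fintype.sum_equiv e.symm _ _ (fun _ => rfl)
    _ = prdn G := hsum

lemma prdn_congr {V W : Type*} [Fintype V] [Fintype W] (G : SimpleGraph V)
    (H : SimpleGraph W) (e : V ≃ W) (he : ∀ a b, G.Adj a b ↔ H.Adj (e a) (e b)) :
    prdn G = prdn H := by
  refine le_antisymm ?_ (prdn_le_of_map G H e he)
  refine prdn_le_of_map H G e.symm ?_
  intro a b
  rw [he]; simp


/-- Generic restriction lemma: a PRDF on a graph on `V ⊕ α` induces a PRDF on the
inl-part, for a modified function `h`, as long as zeros of `h` see no 2 on the inr side. -/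
lemma restrictGen {V α : Type*} {G : SimpleGraph V} {G' : SimpleGraph (V ⊕ α)}
    (hcompat : ∀ a b, G'.Adj (Sum.inl a) (Sum.inl b) ↔ G.Adj a b)
    {g : V ⊕ α → ℕ} (hg : IsPRDF G' g) {h : V → ℕ}
    (hle : ∀ x, h x ≤ 2)
    (h2 : ∀ y, h y = 2 ↔ g (Sum.inl y) = 2)
    (h0 : ∀ x, h x = 0 → g (Sum.inl x) = 0 ∧
      ∀ i : α, ¬(G'.Adj (Sum.inl x) (Sum.inr i) ∧ g (Sum.inr i) = 2)) :
    IsPRDF G h := by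
  refine ⟨hle, fun x hx => ?_⟩
  obtain ⟨hg0, hno⟩ := h0 x hx
  obtain ⟨v, ⟨hvadj, hv2⟩, huniq⟩ := hg.2 (Sum.inl x) hg0
  rcases v with y | i
  · refine ⟨y, ⟨(hcompat x y).mp hvadj, (h2 y).mpr hv2⟩, ?_⟩
    rintro y' ⟨hadj', hy2⟩
    have : Sum.inl y' = Sum.inl y :=
      huniq _ ⟨(hcompat x y').mpr hadj', (h2 y').mp hy2⟩
    exact Sum.inl.injEq .. ▸ this
  · exact absurd ⟨hvadj, hv2⟩ (hno i)


def ext3 {V : Type*} (G : SimpleGraph V) (p : V → Prop) : SimpleGraph (V ⊕ Fin 3) where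
  Adj a b := match a, b with
    | .inl x, .inl y => G.Adj x y
    | .inl x, .inr i => p x ∧ i = 2
    | .inr i, .inl x => p x ∧ i = 2
    | .inr i, .inr j => (i = 2 ∧ j = 1) ∨ (i = 1 ∧ j = 2) ∨ (i = 1 ∧ j = 0) ∨ (i = 0 ∧ j = 1)
  symm := by constructor; rintro (x|i) (y|j) h <;> simp_all <;> tauto
  loopless := by
    constructor; rintro (x|i) h
    · exact G.irrefl h
    · rcases h with ⟨h1,h2⟩|⟨h1,h2⟩|⟨h1,h2⟩|⟨h1,h2⟩ <;> (rw [h1] at h2; exact absurd h2 (by decide))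

section ext3
variable {V : Type*} {G : SimpleGraph V} {p : V → Prop}

@[simp] lemma ext3_adj_ll {x y : V} : (ext3 G p).Adj (.inl x) (.inl y) ↔ G.Adj x y := Iff.rfl
@[simp] lemma ext3_adj_lr {x : V} {i : Fin 3} :
    (ext3 G p).Adj (.inl x) (.inr i) ↔ p x ∧ i = 2 := Iff.rfl
@[simp] lemma ext3_adj_rl {x : V} {i : Fin 3} :
    (ext3 G p).Adj (.inr i) (.inl x) ↔ p x ∧ i = 2 := Iff.rfl
@[simp] lemma ext3_adj_rr {i j : Fin 3} :
    (ext3 G p).Adj (.inr i) (.inr j) ↔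
      (i = 2 ∧ j = 1) ∨ (i = 1 ∧ j = 2) ∨ (i = 1 ∧ j = 0) ∨ (i = 0 ∧ j = 1) := Iff.rfl

lemma prdn_ext3 [Fintype V] (hp : ∀ a b, p a → p b → a = b) :
    prdn (ext3 G p) = prdn G + 2 := by
  refine le_antisymm ?_ ?_
  · -- upper bound
    obtain ⟨f, hf, hsum⟩ := exists_prdn G
    by_cases hex : ∃ y, p y ∧ f y = 2
    · obtain ⟨y0, hpy0, hfy0⟩ := hex
      set F : V ⊕ Fin 3 → ℕ := Sum.elim f (fun i => if i = 2 then 0 else 1) with hF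
      have hPF : IsPRDF (ext3 G p) F := by
        constructor
        · rintro (x|i)
          · exact hf.1 x
          · simp only [hF, Sum.elim_inr]; split <;> omega
        · rintro (x|i) h0
          · obtain ⟨v, ⟨hv, hv2⟩, hun⟩ := hf.2 x h0
            refine ⟨Sum.inl v, ⟨hv, hv2⟩, ?_⟩
            rintro (y|j) ⟨hadj, hy2⟩
            · exact congrArg Sum.inl (hun y ⟨hadj, hy2⟩)
            · obtain ⟨hpx, hj⟩ := hadj
              subst hj
              simp [hF] at hy2
          · have hi : i = 2 := by
              by_contra hi
              simp only [hF, Sum.elim_inr, if_neg hi] at h0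
              exact one_ne_zero h0
            subst hi
            refine ⟨Sum.inl y0, ⟨⟨hpy0, rfl⟩, hfy0⟩, ?_⟩
            rintro (y|j) ⟨hadj, hy2⟩
            · exact congrArg Sum.inl (hp y y0 hadj.1 hpy0)
            · rcases hadj with ⟨_, hj⟩|⟨h,_⟩|⟨h,_⟩|⟨h,_⟩
              · subst hj; simp [hF] at hy2
              · exact absurd h (by decide)
              · exact absurd h (by decide)
              · exact absurd h (by decide)
      have hw : ∑ z, F z = prdn G + 2 := by
        rw [Fintype.sum_sum_type]
        simp [hF, Fin.sum_univ_three, hsum]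
      exact le_of_le_of_eq (prdn_le _ hPF) hw
    · set F : V ⊕ Fin 3 → ℕ := Sum.elim f (fun i => if i = 1 then 2 else 0) with hF
      have hPF : IsPRDF (ext3 G p) F := by
        constructor
        · rintro (x|i)
          · exact hf.1 x
          · simp only [hF, Sum.elim_inr]; split <;> omega
        · rintro (x|i) h0
          · obtain ⟨v, ⟨hv, hv2⟩, hun⟩ := hf.2 x h0
            refine ⟨Sum.inl v, ⟨hv, hv2⟩, ?_⟩
            rintro (y|j) ⟨hadj, hy2⟩
            · exact congrArg Sum.inl (hun y ⟨hadj, hy2⟩)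
            · obtain ⟨hpx, hj⟩ := hadj
              subst hj
              simp [hF] at hy2
          · have hi : i = 0 ∨ i = 2 := by
              have : i ≠ 1 := by
                intro hi; subst hi
                simp [hF] at h0
              omega
            rcases hi with hi | hi <;> subst hi
            · refine ⟨Sum.inr 1, ⟨Or.inr (Or.inr (Or.inr ⟨rfl, rfl⟩)), by simp [hF]⟩, ?_⟩
              rintro (y|j) ⟨hadj, hy2⟩
              · exact absurd hadj.2 (by decide)
              · rcases hadj with ⟨h,_⟩|⟨h,_⟩|⟨h,_⟩|⟨_,hj⟩
                · exact absurd h (by decide)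
                · exact absurd h (by decide)
                · exact absurd h (by decide)
                · exact congrArg Sum.inr hj
            · refine ⟨Sum.inr 1, ⟨Or.inl ⟨rfl, rfl⟩, by simp [hF]⟩, ?_⟩
              rintro (y|j) ⟨hadj, hy2⟩
              · exact absurd ⟨y, hadj.1, hy2⟩ hex
              · rcases hadj with ⟨_,hj⟩|⟨h,_⟩|⟨h,_⟩|⟨h,_⟩
                · exact congrArg Sum.inr hj
                · exact absurd h (by decide)
                · exact absurd h (by decide)
                · exact absurd h (by decide)
      have hw : ∑ z, F z = prdn G + 2 := by
        rw [Fintype.sum_sum_type]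
        simp [hF, Fin.sum_univ_three, hsum]
      exact le_of_le_of_eq (prdn_le _ hPF) hw
  · -- lower bound
    obtain ⟨g, hg, hsum⟩ := exists_prdn (ext3 G p)
    rw [← hsum]
    have hsplit : ∑ z, g z
        = ∑ x, g (Sum.inl x) + (g (Sum.inr 0) + g (Sum.inr 1) + g (Sum.inr 2)) := by
      rw [Fintype.sum_sum_type, Fin.sum_univ_three]
    by_cases h2 : g (Sum.inr 2) = 2
    · -- s ≥ 3 and bump
      have hs : 3 ≤ g (Sum.inr 0) + g (Sum.inr 1) + g (Sum.inr 2) := by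
        by_cases hb : g (Sum.inr 1) = 0
        · have h0ne : g (Sum.inr 0) ≠ 0 := by
            intro h00
            obtain ⟨v, ⟨hadj, hv2⟩, -⟩ := hg.2 (Sum.inr 0) h00
            rcases v with y | j
            · exact absurd hadj.2 (by decide)
            · rcases hadj with ⟨h,_⟩|⟨h,_⟩|⟨h,_⟩|⟨_,hj⟩
              · exact absurd h (by decide)
              · exact absurd h (by decide)
              · exact absurd h (by decide)
              · subst hj; omega
          omega
        · omega
      rcases Classical.em (∃ x0, p x0 ∧ g (Sum.inl x0) = 0) with hex | hex
      · obtain ⟨x0, hpx0, hgx0⟩ := hex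
        classical
        set h : V → ℕ := fun x => if x = x0 then 1 else g (Sum.inl x) with hh
        have hP : IsPRDF G h := by
          refine restrictGen (fun a b => Iff.rfl) hg ?_ ?_ ?_
          · intro x; simp only [hh]; split <;> [omega; exact hg.1 _]
          · intro y; simp only [hh]; split
            · rename_i hy; subst hy; omega
            · exact Iff.rfl
          · intro x hx
            simp only [hh] at hx
            have hxx0 : x ≠ x0 := by intro hxy; subst hxy; simp at hx
            rw [if_neg hxx0] at hx
            refine ⟨hx, ?_⟩
            rintro i ⟨hadj, -⟩
            exact hxx0 (hp x x0 hadj.1 hpx0)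
        have hsum_h : ∑ x, h x ≤ ∑ x, g (Sum.inl x) + 1 := by
          calc ∑ x, h x ≤ ∑ x, (g (Sum.inl x) + if x = x0 then 1 else 0) := by
                refine Finset.sum_le_sum fun x _ => ?_
                simp only [hh]; split
                · rename_i hx; subst hx; omega
                · omega
            _ = ∑ x, g (Sum.inl x) + 1 := by
                rw [Finset.sum_add_distrib, Finset.sum_ite_eq' Finset.univ x0 (fun _ => 1)]
                simp
        have hle := prdn_le G hP
        omega
      · have hP : IsPRDF G (fun x => g (Sum.inl x)) := by
          refine restrictGen (fun a b => Iff.rfl) hg (fun x => hg.1 _) (fun y => Iff.rfl) ?_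
          intro x hx
          refine ⟨hx, ?_⟩
          rintro i ⟨hadj, -⟩
          exact hex ⟨x, hadj.1, hx⟩
        have hle := prdn_le G hP
        omega
    · -- g (inr 2) ≠ 2 : direct restriction, s ≥ 2
      have hs : 2 ≤ g (Sum.inr 0) + g (Sum.inr 1) + g (Sum.inr 2) := by
        by_cases ha : g (Sum.inr 0) = 0
        · obtain ⟨v, ⟨hadj, hv2⟩, -⟩ := hg.2 (Sum.inr 0) ha
          rcases v with y | j
          · exact absurd hadj.2 (by decide)
          · rcases hadj with ⟨h,_⟩|⟨h,_⟩|⟨h,_⟩|⟨_,hj⟩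
            · exact absurd h (by decide)
            · exact absurd h (by decide)
            · exact absurd h (by decide)
            · subst hj; omega
        · by_cases hb : g (Sum.inr 1) = 0
          · obtain ⟨v, ⟨hadj, hv2⟩, -⟩ := hg.2 (Sum.inr 1) hb
            rcases v with y | j
            · exact absurd hadj.2 (by decide)
            · rcases hadj with ⟨h,_⟩|⟨_,hj⟩|⟨_,hj⟩|⟨h,_⟩
              · exact absurd h (by decide)
              · subst hj; omega
              · subst hj; omega
              · exact absurd h (by decide)
          · omega
      have hP : IsPRDF G (fun x => g (Sum.inl x)) := by
        refine restrictGen (fun a b => Iff.rfl) hg (fun x => hg.1 _) (fun y => Iff.rfl) ?_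
        intro x hx
        refine ⟨hx, ?_⟩
        rintro i ⟨hadj, hi2⟩
        rw [hadj.2] at hi2
        exact h2 hi2
      have hle := prdn_le G hP
      omega

end ext3


def extA {V : Type*} (G : SimpleGraph V) (u : V) : SimpleGraph (V ⊕ Fin 2) where
  Adj a b := match a, b with
    | .inl x, .inl y => G.Adj x y
    | .inl x, .inr i => x = u ∧ i = 1
    | .inr i, .inl x => x = u ∧ i = 1
    | .inr i, .inr j => (i = 0 ∧ j = 1) ∨ (i = 1 ∧ j = 0)
  symm := by constructor; rintro (x|i) (y|j) h <;> simp_all <;> tauto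
  loopless := by
    constructor; rintro (x|i) h
    · exact G.irrefl h
    · rcases h with ⟨h1,h2⟩|⟨h1,h2⟩ <;> (rw [h1] at h2; exact absurd h2 (by decide))

def extB {V : Type*} (G : SimpleGraph V) (u : V) : SimpleGraph (V ⊕ Fin 2) where
  Adj a b := match a, b with
    | .inl x, .inl y => G.Adj x y
    | .inl x, .inr i => x = u ∧ i = 1
    | .inr i, .inl x => x = u ∧ i = 1
    | .inr _, .inr _ => False
  symm := by constructor; rintro (x|i) (y|j) h <;> simp_all <;> tauto
  loopless := by
    constructor; rintro (x|i) h
    · exact G.irrefl h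
    · exact h

def extC {V : Type*} (G : SimpleGraph V) : SimpleGraph (V ⊕ Fin 2) where
  Adj a b := match a, b with
    | .inl x, .inl y => G.Adj x y
    | .inl _, .inr _ => False
    | .inr _, .inl _ => False
    | .inr i, .inr j => (i = 0 ∧ j = 1) ∨ (i = 1 ∧ j = 0)
  symm := by constructor; rintro (x|i) (y|j) h <;> simp_all <;> tauto
  loopless := by
    constructor; rintro (x|i) h
    · exact G.irrefl h
    · rcases h with ⟨h1,h2⟩|⟨h1,h2⟩ <;> (rw [h1] at h2; exact absurd h2 (by decide))

section exts
variable {V : Type*} [Fintype V] {G : SimpleGraph V} {u : V}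

lemma prdn_extA (hu : ∀ f : V → ℕ, IsPRDF G f → (∑ v, f v) = prdn G → f u = 0) :
    prdn (extA G u) = prdn G + 2 := by
  refine le_antisymm ?_ ?_
  · obtain ⟨f, hf, hsum⟩ := exists_prdn G
    have hfu : f u = 0 := hu f hf hsum
    set F : V ⊕ Fin 2 → ℕ := Sum.elim f (fun i => if i = 0 then 2 else 0) with hF
    have hPF : IsPRDF (extA G u) F := by
      constructor
      · rintro (x|i)
        · exact hf.1 x
        · simp only [hF, Sum.elim_inr]; split <;> omega
      · rintro (x|i) h0
        · obtain ⟨v, ⟨hv, hv2⟩, hun⟩ := hf.2 x h0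
          refine ⟨Sum.inl v, ⟨hv, hv2⟩, ?_⟩
          rintro (y|j) ⟨hadj, hy2⟩
          · exact congrArg Sum.inl (hun y ⟨hadj, hy2⟩)
          · obtain ⟨hpx, hj⟩ := hadj
            subst hj
            simp [hF] at hy2
        · have hi : i = 1 := by
            by_contra hi
            have : i = 0 := by omega
            subst this
            simp [hF] at h0
          subst hi
          refine ⟨Sum.inr 0, ⟨Or.inr ⟨rfl, rfl⟩, by simp [hF]⟩, ?_⟩
          rintro (y|j) ⟨hadj, hy2⟩
          · obtain ⟨hyu, -⟩ := hadj
            subst hyu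
            simp [hF, hfu] at hy2
          · rcases hadj with ⟨h,_⟩|⟨_,hj⟩
            · exact absurd h (by decide)
            · exact congrArg Sum.inr hj
    have hw : ∑ z, F z = prdn G + 2 := by
      rw [Fintype.sum_sum_type]
      simp [hF, Fin.sum_univ_two, hsum]
    exact le_of_le_of_eq (prdn_le _ hPF) hw
  · obtain ⟨g, hg, hsum⟩ := exists_prdn (extA G u)
    rw [← hsum]
    have hsplit : ∑ z, g z
        = ∑ x, g (Sum.inl x) + (g (Sum.inr 0) + g (Sum.inr 1)) := by
      rw [Fintype.sum_sum_type, Fin.sum_univ_two]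
    by_cases hb : g (Sum.inr 1) = 2
    · -- bump case
      by_cases hgu : g (Sum.inl u) = 0
      · classical
        set h : V → ℕ := fun x => if x = u then 1 else g (Sum.inl x) with hh
        have hP : IsPRDF G h := by
          refine restrictGen (fun a b => Iff.rfl) hg ?_ ?_ ?_
          · intro x; simp only [hh]; split <;> [omega; exact hg.1 _]
          · intro y; simp only [hh]; split
            · rename_i hy; subst hy; rw [hgu]; omega
            · exact Iff.rfl
          · intro x hx
            simp only [hh] at hx
            have hxx0 : x ≠ u := by intro hxy; subst hxy; simp at hx
            rw [if_neg hxx0] at hx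
            refine ⟨hx, ?_⟩
            rintro i ⟨hadj, -⟩
            exact hxx0 hadj.1
        have hsum_h : ∑ x, h x ≤ ∑ x, g (Sum.inl x) + 1 := by
          calc ∑ x, h x ≤ ∑ x, (g (Sum.inl x) + if x = u then 1 else 0) := by
                refine Finset.sum_le_sum fun x _ => ?_
                simp only [hh]; split
                · rename_i hx; subst hx; omega
                · omega
            _ = ∑ x, g (Sum.inl x) + 1 := by
                rw [Finset.sum_add_distrib, Finset.sum_ite_eq' Finset.univ u (fun _ => 1)]
                simp
        have hle := prdn_le G hP
        have hne : prdn G ≠ ∑ x, h x := by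
          intro heq
          have := hu h hP heq.symm
          simp [hh] at this
        omega
      · have hP : IsPRDF G (fun x => g (Sum.inl x)) := by
          refine restrictGen (fun a b => Iff.rfl) hg (fun x => hg.1 _) (fun y => Iff.rfl) ?_
          intro x hx
          refine ⟨hx, ?_⟩
          rintro i ⟨hadj, -⟩
          rw [hadj.1] at hx
          exact hgu hx
        have hle := prdn_le G hP
        have hne : prdn G ≠ ∑ x, g (Sum.inl x) := by
          intro heq
          exact hgu (hu _ hP heq.symm)
        omega
    · -- g (inr 1) ≠ 2
      have hP : IsPRDF G (fun x => g (Sum.inl x)) := by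
        refine restrictGen (fun a b => Iff.rfl) hg (fun x => hg.1 _) (fun y => Iff.rfl) ?_
        intro x hx
        refine ⟨hx, ?_⟩
        rintro i ⟨hadj, hi2⟩
        rw [hadj.2] at hi2
        exact hb hi2
      have hle := prdn_le G hP
      have ha1 : g (Sum.inr 0) ≠ 0 := by
        intro h00
        obtain ⟨v, ⟨hadj, hv2⟩, -⟩ := hg.2 (Sum.inr 0) h00
        rcases v with y | j
        · exact absurd hadj.2 (by decide)
        · rcases hadj with ⟨_,hj⟩|⟨h,_⟩
          · subst hj; exact hb hv2
          · exact absurd h (by decide)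
      by_cases hb0 : g (Sum.inr 1) = 0
      · -- existence for inr 1: either a = 2 or g (inl u) = 2
        obtain ⟨v, ⟨hadj, hv2⟩, -⟩ := hg.2 (Sum.inr 1) hb0
        rcases v with y | j
        · -- y = u, g (inl u) = 2 : strict trick
          obtain ⟨hyu, -⟩ := hadj
          subst hyu
          have hne : prdn G ≠ ∑ x, g (Sum.inl x) := by
            intro heq
            have := hu _ hP heq.symm
            omega
          omega
        · rcases hadj with ⟨h,_⟩|⟨_,hj⟩
          · exact absurd h (by decide)
          · subst hj; omega
      · omega

lemma prdn_extB (hu : ∀ f : V → ℕ, IsPRDF G f → (∑ v, f v) = prdn G → f u = 0) :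
    prdn (extB G u) = prdn G + 2 := by
  refine le_antisymm ?_ ?_
  · obtain ⟨f, hf, hsum⟩ := exists_prdn G
    set F : V ⊕ Fin 2 → ℕ := Sum.elim f (fun _ => 1) with hF
    have hPF : IsPRDF (extB G u) F := by
      constructor
      · rintro (x|i)
        · exact hf.1 x
        · exact one_le_two
      · rintro (x|i) h0
        · obtain ⟨v, ⟨hv, hv2⟩, hun⟩ := hf.2 x h0
          refine ⟨Sum.inl v, ⟨hv, hv2⟩, ?_⟩
          rintro (y|j) ⟨hadj, hy2⟩
          · exact congrArg Sum.inl (hun y ⟨hadj, hy2⟩)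
          · simp [hF] at hy2
        · simp [hF] at h0
    have hw : ∑ z, F z = prdn G + 2 := by
      rw [Fintype.sum_sum_type]
      simp [hF, Fin.sum_univ_two, hsum]
    exact le_of_le_of_eq (prdn_le _ hPF) hw
  · obtain ⟨g, hg, hsum⟩ := exists_prdn (extB G u)
    rw [← hsum]
    have hsplit : ∑ z, g z
        = ∑ x, g (Sum.inl x) + (g (Sum.inr 0) + g (Sum.inr 1)) := by
      rw [Fintype.sum_sum_type, Fin.sum_univ_two]
    have ha1 : g (Sum.inr 0) ≠ 0 := by
      intro h00
      obtain ⟨v, ⟨hadj, hv2⟩, -⟩ := hg.2 (Sum.inr 0) h00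
      rcases v with y | j
      · exact absurd hadj.2 (by decide)
      · exact hadj
    by_cases hb : g (Sum.inr 1) = 2
    · by_cases hgu : g (Sum.inl u) = 0
      · classical
        set h : V → ℕ := fun x => if x = u then 1 else g (Sum.inl x) with hh
        have hP : IsPRDF G h := by
          refine restrictGen (fun a b => Iff.rfl) hg ?_ ?_ ?_
          · intro x; simp only [hh]; split <;> [omega; exact hg.1 _]
          · intro y; simp only [hh]; split
            · rename_i hy; subst hy; rw [hgu]; omega
            · exact Iff.rfl
          · intro x hx
            simp only [hh] at hx
            have hxx0 : x ≠ u := by intro hxy; subst hxy; simp at hx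
            rw [if_neg hxx0] at hx
            refine ⟨hx, ?_⟩
            rintro i ⟨hadj, -⟩
            exact hxx0 hadj.1
        have hsum_h : ∑ x, h x ≤ ∑ x, g (Sum.inl x) + 1 := by
          calc ∑ x, h x ≤ ∑ x, (g (Sum.inl x) + if x = u then 1 else 0) := by
                refine Finset.sum_le_sum fun x _ => ?_
                simp only [hh]; split
                · rename_i hx; subst hx; omega
                · omega
            _ = ∑ x, g (Sum.inl x) + 1 := by
                rw [Finset.sum_add_distrib, Finset.sum_ite_eq' Finset.univ u (fun _ => 1)]
                simp
        have hle := prdn_le G hP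
        have hne : prdn G ≠ ∑ x, h x := by
          intro heq
          have := hu h hP heq.symm
          simp [hh] at this
        omega
      · have hP : IsPRDF G (fun x => g (Sum.inl x)) := by
          refine restrictGen (fun a b => Iff.rfl) hg (fun x => hg.1 _) (fun y => Iff.rfl) ?_
          intro x hx
          refine ⟨hx, ?_⟩
          rintro i ⟨hadj, -⟩
          rw [hadj.1] at hx
          exact hgu hx
        have hle := prdn_le G hP
        have hne : prdn G ≠ ∑ x, g (Sum.inl x) := by
          intro heq
          exact hgu (hu _ hP heq.symm)
        omega
    · have hP : IsPRDF G (fun x => g (Sum.inl x)) := by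
        refine restrictGen (fun a b => Iff.rfl) hg (fun x => hg.1 _) (fun y => Iff.rfl) ?_
        intro x hx
        refine ⟨hx, ?_⟩
        rintro i ⟨hadj, hi2⟩
        rw [hadj.2] at hi2
        exact hb hi2
      have hle := prdn_le G hP
      by_cases hb0 : g (Sum.inr 1) = 0
      · obtain ⟨v, ⟨hadj, hv2⟩, -⟩ := hg.2 (Sum.inr 1) hb0
        rcases v with y | j
        · obtain ⟨hyu, -⟩ := hadj
          subst hyu
          have hne : prdn G ≠ ∑ x, g (Sum.inl x) := by
            intro heq
            have := hu _ hP heq.symm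
            omega
          omega
        · exact absurd hadj (by exact id)
      · omega

lemma prdn_extC : prdn (extC G) = prdn G + 2 := by
  refine le_antisymm ?_ ?_
  · obtain ⟨f, hf, hsum⟩ := exists_prdn G
    set F : V ⊕ Fin 2 → ℕ := Sum.elim f (fun i => if i = 1 then 2 else 0) with hF
    have hPF : IsPRDF (extC G) F := by
      constructor
      · rintro (x|i)
        · exact hf.1 x
        · simp only [hF, Sum.elim_inr]; split <;> omega
      · rintro (x|i) h0
        · obtain ⟨v, ⟨hv, hv2⟩, hun⟩ := hf.2 x h0
          refine ⟨Sum.inl v, ⟨hv, hv2⟩, ?_⟩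
          rintro (y|j) ⟨hadj, hy2⟩
          · exact congrArg Sum.inl (hun y ⟨hadj, hy2⟩)
          · exact absurd hadj (by exact id)
        · have hi : i = 0 := by
            by_contra hi
            have : i = 1 := by omega
            subst this
            simp [hF] at h0
          subst hi
          refine ⟨Sum.inr 1, ⟨Or.inl ⟨rfl, rfl⟩, by simp [hF]⟩, ?_⟩
          rintro (y|j) ⟨hadj, hy2⟩
          · exact absurd hadj (by exact id)
          · rcases hadj with ⟨_,hj⟩|⟨h,_⟩
            · exact congrArg Sum.inr hj
            · exact absurd h (by decide)
    have hw : ∑ z, F z = prdn G + 2 := by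
      rw [Fintype.sum_sum_type]
      simp [hF, Fin.sum_univ_two, hsum]
    exact le_of_le_of_eq (prdn_le _ hPF) hw
  · obtain ⟨g, hg, hsum⟩ := exists_prdn (extC G)
    rw [← hsum]
    have hsplit : ∑ z, g z
        = ∑ x, g (Sum.inl x) + (g (Sum.inr 0) + g (Sum.inr 1)) := by
      rw [Fintype.sum_sum_type, Fin.sum_univ_two]
    have hP : IsPRDF G (fun x => g (Sum.inl x)) := by
      refine restrictGen (fun a b => Iff.rfl) hg (fun x => hg.1 _) (fun y => Iff.rfl) ?_
      intro x hx
      exact ⟨hx, fun i hi => hi.1⟩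
    have hle := prdn_le G hP
    have hs : 2 ≤ g (Sum.inr 0) + g (Sum.inr 1) := by
      by_cases ha : g (Sum.inr 0) = 0
      · obtain ⟨v, ⟨hadj, hv2⟩, -⟩ := hg.2 (Sum.inr 0) ha
        rcases v with y | j
        · exact absurd hadj (by exact id)
        · rcases hadj with ⟨_,hj⟩|⟨h,_⟩
          · subst hj; omega
          · exact absurd h (by decide)
      · by_cases hb : g (Sum.inr 1) = 0
        · obtain ⟨v, ⟨hadj, hv2⟩, -⟩ := hg.2 (Sum.inr 1) hb
          rcases v with y | j
          · exact absurd hadj (by exact id)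
          · rcases hadj with ⟨h,_⟩|⟨_,hj⟩
            · exact absurd h (by decide)
            · subst hj; omega
        · omega
    omega

end exts


section equivs
variable {V : Type*}

@[simp] lemma extA_adj_ll {G : SimpleGraph V} {u : V} {x y : V} :
    (extA G u).Adj (.inl x) (.inl y) ↔ G.Adj x y := Iff.rfl
@[simp] lemma extA_adj_lr {G : SimpleGraph V} {u : V} {x : V} {i : Fin 2} :
    (extA G u).Adj (.inl x) (.inr i) ↔ x = u ∧ i = 1 := Iff.rfl
@[simp] lemma extA_adj_rl {G : SimpleGraph V} {u : V} {x : V} {i : Fin 2} :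
    (extA G u).Adj (.inr i) (.inl x) ↔ x = u ∧ i = 1 := Iff.rfl
@[simp] lemma extA_adj_rr {G : SimpleGraph V} {u : V} {i j : Fin 2} :
    (extA G u).Adj (.inr i) (.inr j) ↔ (i = 0 ∧ j = 1) ∨ (i = 1 ∧ j = 0) := Iff.rfl
@[simp] lemma extB_adj_ll {G : SimpleGraph V} {u : V} {x y : V} :
    (extB G u).Adj (.inl x) (.inl y) ↔ G.Adj x y := Iff.rfl
@[simp] lemma extB_adj_lr {G : SimpleGraph V} {u : V} {x : V} {i : Fin 2} :
    (extB G u).Adj (.inl x) (.inr i) ↔ x = u ∧ i = 1 := Iff.rfl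
@[simp] lemma extB_adj_rl {G : SimpleGraph V} {u : V} {x : V} {i : Fin 2} :
    (extB G u).Adj (.inr i) (.inl x) ↔ x = u ∧ i = 1 := Iff.rfl
@[simp] lemma extB_adj_rr {G : SimpleGraph V} {u : V} {i j : Fin 2} :
    (extB G u).Adj (.inr i) (.inr j) ↔ False := Iff.rfl
@[simp] lemma extC_adj_ll {G : SimpleGraph V} {x y : V} :
    (extC G).Adj (.inl x) (.inl y) ↔ G.Adj x y := Iff.rfl
@[simp] lemma extC_adj_lr {G : SimpleGraph V} {x : V} {i : Fin 2} :
    (extC G).Adj (.inl x) (.inr i) ↔ False := Iff.rfl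
@[simp] lemma extC_adj_rl {G : SimpleGraph V} {x : V} {i : Fin 2} :
    (extC G).Adj (.inr i) (.inl x) ↔ False := Iff.rfl
@[simp] lemma extC_adj_rr {G : SimpleGraph V} {i j : Fin 2} :
    (extC G).Adj (.inr i) (.inr j) ↔ (i = 0 ∧ j = 1) ∨ (i = 1 ∧ j = 0) := Iff.rfl

def equivL (x : V) : {y : V // y ≠ x} ⊕ Fin 3 ≃ {z : V ⊕ Fin 3 // z ≠ Sum.inl x} where
  toFun w := match w with
    | .inl s => ⟨.inl s.1, by simp [s.2]⟩
    | .inr i => ⟨.inr i, by simp⟩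
  invFun z := match z with
    | ⟨.inl y, hy⟩ => .inl ⟨y, fun h => hy (by rw [h])⟩
    | ⟨.inr i, _⟩ => .inr i
  left_inv := by rintro (⟨y, hy⟩ | i) <;> rfl
  right_inv := by rintro ⟨(y | i), h⟩ <;> rfl

@[simp] lemma equivL_inl (x : V) (s : {y : V // y ≠ x}) :
    ((equivL x) (Sum.inl s)).1 = Sum.inl s.1 := rfl
@[simp] lemma equivL_inr (x : V) (i : Fin 3) :
    ((equivL x) (Sum.inr i)).1 = Sum.inr i := rfl

def equivR (i0 : Fin 3) (m : Fin 2 → Fin 3) (hm : ∀ k, m k ≠ i0)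
    (minv : Fin 3 → Fin 2) (hmi : ∀ k, minv (m k) = k)
    (hsurj : ∀ j : Fin 3, j ≠ i0 → m (minv j) = j) :
    V ⊕ Fin 2 ≃ {z : V ⊕ Fin 3 // z ≠ Sum.inr i0} where
  toFun w := match w with
    | .inl y => ⟨.inl y, by simp⟩
    | .inr k => ⟨.inr (m k), by simp [hm k]⟩
  invFun z := match z with
    | ⟨.inl y, _⟩ => .inl y
    | ⟨.inr j, _⟩ => .inr (minv j)
  left_inv := by
    rintro (y | k)
    · rfl
    · simp [hmi k]
  right_inv := by
    rintro ⟨(y | j), h⟩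
    · rfl
    · have hj : j ≠ i0 := by simpa using h
      simp [hsurj j hj]

@[simp] lemma equivR_inl (i0 : Fin 3) (m) (hm) (minv) (hmi) (hsurj) (y : V) :
    ((equivR (V := V) i0 m hm minv hmi hsurj) (Sum.inl y)).1 = Sum.inl y := rfl
@[simp] lemma equivR_inr (i0 : Fin 3) (m) (hm) (minv) (hmi) (hsurj) (k : Fin 2) :
    ((equivR (V := V) i0 m hm minv hmi hsurj) (Sum.inr k)).1 = Sum.inr (m k) := rfl

end equivs



/-- Operation O₁ (attaching a pendant path `u - v₃ - v₂ - v₁` at a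
vertex `u ∈ W(Tᵢ)`, with v₁ = inr 0, v₂ = inr 1, v₃ = inr 2) applied to a
perfect Roman domination stable tree yields a perfect Roman domination stable tree. -/
theorem stmt6 {V : Type*} [Fintype V] [DecidableEq V] (T : SimpleGraph V)
    (hT : T.IsTree) (hstab : Stable T) (u : V) (hu : u ∈ Wset T)
    (T' : SimpleGraph (V ⊕ Fin 3))
    (hadj : ∀ a b : V ⊕ Fin 3, T'.Adj a b ↔
      ((∃ x y : V, a = Sum.inl x ∧ b = Sum.inl y ∧ T.Adj x y) ∨
       (a = Sum.inl u ∧ b = Sum.inr 2) ∨ (a = Sum.inr 2 ∧ b = Sum.inl u) ∨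
       (a = Sum.inr 2 ∧ b = Sum.inr 1) ∨ (a = Sum.inr 1 ∧ b = Sum.inr 2) ∨
       (a = Sum.inr 1 ∧ b = Sum.inr 0) ∨ (a = Sum.inr 0 ∧ b = Sum.inr 1))) :
    Stable T' := by
  
  classical
  have hueq : ∀ a b : V, a = u → b = u → a = b := fun a b ha hb => ha.trans hb.symm
  have hmain : prdn T' = prdn T + 2 := by
    have he : ∀ a b : V ⊕ Fin 3, T'.Adj a b ↔ (ext3 T (· = u)).Adj a b := by
      rintro (x|i) (y|j) <;> rw [hadj] <;> simp <;> tauto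
    rw [prdn_congr T' (ext3 T (· = u)) (Equiv.refl _) he, prdn_ext3 hueq]
  intro w
  rw [hmain]
  rcases w with x | i
  · -- removal of an original vertex
    have he : ∀ a b : {y : V // y ≠ x} ⊕ Fin 3,
        (ext3 (T.induce {y | y ≠ x}) (fun s => s.1 = u)).Adj a b ↔
          (T'.induce {z | z ≠ Sum.inl x}).Adj (equivL x a) (equivL x b) := by
      rintro (s|i) (s'|j) <;>
        · simp only [comap_adj, Function.Embedding.coe_subtype, equivL_inl, equivL_inr,
            ext3_adj_ll, ext3_adj_lr, ext3_adj_rl, ext3_adj_rr]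
          rw [hadj]
          simp
          try tauto
    rw [← prdn_congr _ _ (equivL x) he,
      prdn_ext3 (fun a b ha hb => Subtype.ext (ha.trans hb.symm)), hstab x]
  · fin_cases i
    · -- removal of v₁
      show prdn (T'.induce {z | z ≠ Sum.inr 0}) = prdn T + 2
      have he : ∀ a b : V ⊕ Fin 2, (extA T u).Adj a b ↔
          (T'.induce {z | z ≠ Sum.inr 0}).Adj
            (equivR 0 (fun k => if k = 0 then 1 else 2) (by decide)
              (fun j => if j = 1 then 0 else 1) (by decide) (by decide) a)
            (equivR 0 (fun k => if k = 0 then 1 else 2) (by decide)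
              (fun j => if j = 1 then 0 else 1) (by decide) (by decide) b) := by
        rintro (y|k) (y'|k') <;>
          · simp only [comap_adj, Function.Embedding.coe_subtype, equivR_inl, equivR_inr]
            (try fin_cases k) <;> (try fin_cases k') <;>
              · rw [hadj]
                simp
                try tauto
      rw [← prdn_congr _ _ _ he, prdn_extA hu]
    · -- removal of v₂
      show prdn (T'.induce {z | z ≠ Sum.inr 1}) = prdn T + 2
      have he : ∀ a b : V ⊕ Fin 2, (extB T u).Adj a b ↔
          (T'.induce {z | z ≠ Sum.inr 1}).Adj
            (equivR 1 (fun k => if k = 0 then 0 else 2) (by decide)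
              (fun j => if j = 0 then 0 else 1) (by decide) (by decide) a)
            (equivR 1 (fun k => if k = 0 then 0 else 2) (by decide)
              (fun j => if j = 0 then 0 else 1) (by decide) (by decide) b) := by
        rintro (y|k) (y'|k') <;>
          · simp only [comap_adj, Function.Embedding.coe_subtype, equivR_inl, equivR_inr]
            (try fin_cases k) <;> (try fin_cases k') <;>
              · rw [hadj]
                simp
                try tauto
      rw [← prdn_congr _ _ _ he, prdn_extB hu]
    · -- removal of v₃
      show prdn (T'.induce {z | z ≠ Sum.inr 2}) = prdn T + 2
      have he : ∀ a b : V ⊕ Fin 2, (extC T).Adj a b ↔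
          (T'.induce {z | z ≠ Sum.inr 2}).Adj
            (equivR 2 (fun k => if k = 0 then 0 else 1) (by decide)
              (fun j => if j = 0 then 0 else 1) (by decide) (by decide) a)
            (equivR 2 (fun k => if k = 0 then 0 else 1) (by decide)
              (fun j => if j = 0 then 0 else 1) (by decide) (by decide) b) := by
        rintro (y|k) (y'|k') <;>
          · simp only [comap_adj, Function.Embedding.coe_subtype, equivR_inl, equivR_inr]
            (try fin_cases k) <;> (try fin_cases k') <;>
              · rw [hadj]
                simp
                try tauto
      rw [← prdn_congr _ _ _ he, prdn_extC]
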